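/- Let g be a Schwartz function on ℝ whose Fourier transform ĝ is compactly supported, and for σ ∈ ℝ define g_σ(t) := ∫ ĝ(u) e^{2πiu(t+iσ)} du. Then each g_σ is a Schwartz function and g_σ → g in the Schwartz space topology as σ → 0. -/

import Mathlib

open Complex Filter

section aux

open MeasureTheory Real SchwartzMap

lemma contDiff_cexp_real (c : ℂ) : ContDiff ℝ (⊤ : ℕ∞) (fun u : ℝ => Complex.exp (c * u)) :=
  (contDiff_const.mul Complex.ofRealCLM.contDiff).cexp

lemma hasDerivAt_cexp_real (c : ℂ) (x : ℝ) :
    HasDerivAt (fun u : ℝ => Complex.exp (c * u)) (Complex.exp (c * x) * c) x := by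
  have h1 : HasDerivAt (fun u : ℝ => (c * u : ℂ)) c x := by
    simpa using (Complex.ofRealCLM.hasDerivAt (x := x)).const_mul c
  exact h1.cexp

lemma iteratedDeriv_cexp_real (c : ℂ) (n : ℕ) :
    iteratedDeriv n (fun u : ℝ => Complex.exp (c * u))
      = fun u : ℝ => c ^ n * Complex.exp (c * u) := by
  induction n with
  | zero => simp
  | succ n ih =>
    funext x
    rw [iteratedDeriv_succ, ih, ((hasDerivAt_cexp_real c x).const_mul (c ^ n)).deriv]
    ring

lemma iteratedDeriv_cexp_real_sub_one (c : ℂ) (k : ℕ) :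
    iteratedDeriv (k + 1) (fun u : ℝ => Complex.exp (c * u) - 1)
      = fun x : ℝ => c ^ (k + 1) * Complex.exp (c * x) := by
  rw [iteratedDeriv_succ']
  have hder : deriv (fun u : ℝ => Complex.exp (c * u) - 1)
      = fun u : ℝ => c * Complex.exp (c * u) := by
    funext x
    rw [((hasDerivAt_cexp_real c x).sub_const 1).deriv]
    ring
  rw [hder]
  have : (fun u : ℝ => c * Complex.exp (c * u)) = c • (fun u : ℝ => Complex.exp (c * u)) := rfl
  rw [this]
  funext x
  rw [← iteratedDerivWithin_univ,
    iteratedDerivWithin_const_smul (Set.mem_univ x) uniqueDiffOn_univ c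
      ((contDiff_cexp_real c).of_le (by exact_mod_cast le_top)).contDiffWithinAt,
    iteratedDerivWithin_univ, iteratedDeriv_cexp_real]
  simp [smul_eq_mul]
  ring

lemma iter_bound (c : ℂ) (R : ℝ) (hR : 1 ≤ R) (hc : ‖c‖ * R ≤ 1) (j : ℕ) (x : ℝ)
    (hx : |x| ≤ R) :
    ‖iteratedFDeriv ℝ j (fun u : ℝ => Complex.exp (c * u) - 1) x‖ ≤ 3 * ‖c‖ * R := by
  have hc1 : ‖c‖ ≤ 1 := by nlinarith [norm_nonneg c]
  have hcx : ‖c * (x : ℂ)‖ ≤ 1 := by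
    rw [norm_mul, Complex.norm_real, Real.norm_eq_abs]
    nlinarith [norm_nonneg c, abs_nonneg x]
  rw [norm_iteratedFDeriv_eq_norm_iteratedDeriv]
  obtain _ | k := j
  · rw [iteratedDeriv_zero]
    have h1 : ‖Complex.exp (c * x) - 1‖ ≤ 2 * ‖c * (x : ℂ)‖ := by
      simpa using Complex.norm_exp_sub_one_le (x := c * x) (by simpa using hcx)
    have h2 : ‖c * (x : ℂ)‖ ≤ ‖c‖ * R := by
      rw [norm_mul, Complex.norm_real, Real.norm_eq_abs]
      nlinarith [norm_nonneg c]
    nlinarith [norm_nonneg c]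
  · rw [iteratedDeriv_cexp_real_sub_one]
    have h1 : ‖c ^ (k + 1) * Complex.exp (c * x)‖ = ‖c‖ ^ (k + 1) * ‖Complex.exp (c * x)‖ := by
      rw [norm_mul, norm_pow]
    rw [h1]
    have h2 : ‖c‖ ^ (k + 1) ≤ ‖c‖ := by
      simpa using pow_le_pow_of_le_one (norm_nonneg c) hc1 (Nat.one_le_iff_ne_zero.mpr (by simp))
    have h3 : ‖Complex.exp (c * x)‖ ≤ 3 := by
      have : ‖Complex.exp (c * x)‖ = Real.exp ((c * x).re) := Complex.norm_exp _
      rw [this]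
      have hre : (c * (x : ℂ)).re ≤ 1 := (Complex.re_le_norm _).trans hcx
      calc Real.exp ((c * x).re) ≤ Real.exp 1 := Real.exp_le_exp.mpr hre
        _ ≤ 3 := by
            have := Real.exp_one_lt_d9
            linarith
    nlinarith [norm_nonneg c, norm_nonneg (Complex.exp (c * x)),
      pow_nonneg (norm_nonneg c) (k + 1)]

/-- A smooth compactly supported function is a Schwartz function. -/
noncomputable def toSchwartz (f : ℝ → ℂ) (hf : ContDiff ℝ (⊤ : ℕ∞) f) (h : HasCompactSupport f) :
    SchwartzMap ℝ ℂ where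
  toFun := f
  smooth' := hf
  decay' := by
    intro k n
    have hcont : Continuous fun x : ℝ => ‖x‖ ^ k * ‖iteratedFDeriv ℝ n f x‖ :=
      (continuous_norm.pow k).mul (hf.continuous_iteratedFDeriv (mod_cast le_top)).norm
    obtain ⟨C, hC⟩ := h.exists_bound_of_continuousOn hcont.continuousOn
    refine ⟨max C 0, fun x => ?_⟩
    by_cases hx : x ∈ tsupport f
    · exact (le_abs_self _).trans ((hC x hx).trans (le_max_left _ _))
    · have h0 : iteratedFDeriv ℝ n f x = 0 := by
        by_contra h0
        exact hx (support_iteratedFDeriv_subset n (by simpa [Function.mem_support] using h0))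
      simp [h0, le_max_right C 0]

@[simp] lemma toSchwartz_apply (f : ℝ → ℂ) (hf : ContDiff ℝ (⊤ : ℕ∞) f) (h : HasCompactSupport f)
    (x : ℝ) : toSchwartz f hf h x = f x := rfl

end aux

open MeasureTheory Real FourierTransform in
open scoped RealInnerProductSpace in
/-- If `g` is a Schwartz function whose Fourier transform is compactly supported, then the
vertical translates `g_σ(t) = ∫ ĝ(u) e^{2πiu(t+iσ)} du` are Schwartz functions and
`g_σ → g` in the Schwartz space topology as `σ → 0`. -/
theorem vertical_translates_tendsto
    (g : SchwartzMap ℝ ℂ)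
    (hsupp : HasCompactSupport ((SchwartzMap.fourierTransformCLM ℂ g : SchwartzMap ℝ ℂ) : ℝ → ℂ)) :
    ∃ gs : ℝ → SchwartzMap ℝ ℂ,
      (∀ (σ : ℝ) (t : ℝ), gs σ t = ∫ u : ℝ,
        (SchwartzMap.fourierTransformCLM ℂ g) u *
          Complex.exp (2 * Real.pi * I * u * ((t : ℂ) + I * σ))) ∧
      Tendsto gs (nhds 0) (nhds g) := by
  set φ : SchwartzMap ℝ ℂ := SchwartzMap.fourierTransformCLM ℂ g with hφ
  -- the multiplier
  set c : ℝ → ℂ := fun σ => ((-(2 * Real.pi * σ) : ℝ) : ℂ) with hc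
  have hsm : ∀ σ : ℝ, ContDiff ℝ (⊤ : ℕ∞) (fun u : ℝ => φ u * Complex.exp (c σ * u)) :=
    fun σ => φ.smooth'.mul (contDiff_cexp_real (c σ))
  have hcs : ∀ σ : ℝ, HasCompactSupport (fun u : ℝ => φ u * Complex.exp (c σ * u)) :=
    fun σ => hsupp.mul_right
  set h : ℝ → SchwartzMap ℝ ℂ := fun σ => toSchwartz _ (hsm σ) (hcs σ) with hh
  refine ⟨fun σ => (SchwartzMap.fourierTransformCLE ℂ (SchwartzMap ℝ ℂ)).symm (h σ), ?_, ?_⟩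
  · intro σ t
    have h1 : (SchwartzMap.fourierTransformCLE ℂ (SchwartzMap ℝ ℂ)).symm (h σ) t = 𝓕⁻ (⇑(h σ)) t := by
      exact congrFun (SchwartzMap.fourierInv_coe (h σ)) t
    rw [h1, Real.fourierInv_eq']
    refine integral_congr_ae (Filter.Eventually.of_forall fun u => ?_)
    have hinner : (inner ℝ u t : ℝ) = u * t := by
      simp [RCLike.inner_apply, mul_comm]
    simp only [hinner]
    show Complex.exp ((2 * π * (u * t) : ℝ) * Complex.I) * (φ u * Complex.exp (c σ * u)) = _
    have hexp : ((2 * π * (u * t) : ℝ) : ℂ) * Complex.I + c σ * u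
        = 2 * π * Complex.I * u * ((t : ℂ) + Complex.I * σ) := by
      push_cast [hc]
      linear_combination (-2 * (π : ℂ) * u * σ) * Complex.I_sq
    rw [show Complex.exp ((2 * π * (u * t) : ℝ) * Complex.I) * (φ u * Complex.exp (c σ * u))
        = φ u * (Complex.exp ((2 * π * (u * t) : ℝ) * Complex.I) * Complex.exp (c σ * u)) by ring,
      ← Complex.exp_add, hexp]
  · -- convergence
    obtain ⟨r, hr⟩ := hsupp.isBounded.subset_closedBall 0
    set R : ℝ := max r 1 with hRdef
    have hR1 : (1 : ℝ) ≤ R := le_max_right r 1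
    have hR0 : (0 : ℝ) < R := lt_of_lt_of_le one_pos hR1
    have hKR : ∀ x ∈ tsupport (⇑φ), |x| ≤ R := by
      intro x hx
      have := hr hx
      rw [Metric.mem_closedBall, Real.dist_eq, sub_zero] at this
      exact this.trans (le_max_left r 1)
    have hsymm : (SchwartzMap.fourierTransformCLE ℂ (SchwartzMap ℝ ℂ)).symm φ = g := by
      have : φ = SchwartzMap.fourierTransformCLE ℂ (SchwartzMap ℝ ℂ) g := rfl
      rw [this, ContinuousLinearEquiv.symm_apply_apply]
    rw [show (nhds g) = nhds ((SchwartzMap.fourierTransformCLE ℂ (SchwartzMap ℝ ℂ)).symm φ) by rw [hsymm]]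
    refine Tendsto.comp ((SchwartzMap.fourierTransformCLE ℂ (SchwartzMap ℝ ℂ)).symm.continuous.tendsto φ) ?_
    -- main: h σ → φ in Schwartz topology
    rw [(schwartz_withSeminorms ℝ ℝ ℂ).tendsto_nhds]
    rintro ⟨k, n⟩ ε hε
    set S : ℝ := ∑ j ∈ Finset.range (n + 1), (n.choose j : ℝ) * SchwartzMap.seminorm ℝ 0 j φ
      with hS
    have hSnn : 0 ≤ S := Finset.sum_nonneg fun j _ => by positivity
    set C : ℝ := R ^ k * S * 3 * R * (2 * π) with hCdef
    have hCnn : 0 ≤ C := by positivity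
    set δ : ℝ := (2 * π * R)⁻¹ with hδ
    have hδ0 : 0 < δ := by positivity
    have key : ∀ σ : ℝ, |σ| ≤ δ →
        SchwartzMap.seminorm ℝ k n (h σ - φ) ≤ C * |σ| := by
      intro σ hσ
      have hnc : ‖c σ‖ = 2 * π * |σ| := by
        simp only [hc, Complex.norm_real, Real.norm_eq_abs, abs_neg, abs_mul, _root_.abs_two,
          _root_.abs_of_nonneg pi_pos.le]
      have hcR : ‖c σ‖ * R ≤ 1 := by
        rw [hnc]
        have h2 : 2 * π * |σ| * R ≤ 2 * π * (2 * π * R)⁻¹ * R := by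
          gcongr
        calc 2 * π * |σ| * R ≤ 2 * π * (2 * π * R)⁻¹ * R := h2
          _ = 1 := by field_simp
      refine SchwartzMap.seminorm_le_bound ℝ k n _ (by positivity) fun x => ?_
      have coe_eq : ⇑(h σ - φ) = fun u : ℝ => φ u * (Complex.exp (c σ * u) - 1) := by
        funext u
        simp only [SchwartzMap.sub_apply, hh, toSchwartz_apply]
        ring
      rw [coe_eq]
      by_cases hx : x ∈ tsupport (⇑φ)
      · have hxR := hKR x hx
        have hmul := norm_iteratedFDeriv_mul_le (𝕜 := ℝ)
          (g := fun u : ℝ => Complex.exp (c σ * u) - 1) φ.smooth'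
          ((contDiff_cexp_real (c σ)).sub (contDiff_const (c := (1:ℂ)))) x
          (by exact_mod_cast (le_top : (n : ℕ∞) ≤ ⊤))
        have hSb : ‖iteratedFDeriv ℝ n (fun u : ℝ => φ u * (Complex.exp (c σ * u) - 1)) x‖
            ≤ S * (3 * ‖c σ‖ * R) := by
          refine hmul.trans ?_
          rw [hS, Finset.sum_mul]
          refine Finset.sum_le_sum fun j hj => ?_
          rw [mul_assoc, mul_assoc]
          refine mul_le_mul_of_nonneg_left ?_ (by positivity)
          exact mul_le_mul (SchwartzMap.norm_iteratedFDeriv_le_seminorm ℝ φ j x)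
            (iter_bound (c σ) R hR1 hcR (n - j) x hxR) (norm_nonneg _) (apply_nonneg _ _)
        have hxk : ‖x‖ ^ k ≤ R ^ k := by
          refine pow_le_pow_left₀ (norm_nonneg x) ?_ k
          simpa [Real.norm_eq_abs] using hxR
        calc ‖x‖ ^ k * ‖iteratedFDeriv ℝ n (fun u : ℝ => φ u * (Complex.exp (c σ * u) - 1)) x‖
            ≤ R ^ k * (S * (3 * ‖c σ‖ * R)) :=
              mul_le_mul hxk hSb (norm_nonneg _) (by positivity)
          _ = C * |σ| := by rw [hnc, hCdef]; ring
      · have hts : tsupport (fun u : ℝ => φ u * (Complex.exp (c σ * u) - 1)) ⊆ tsupport (⇑φ) :=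
          closure_mono (Function.support_mul_subset_left _ _)
        have h0 : iteratedFDeriv ℝ n (fun u : ℝ => φ u * (Complex.exp (c σ * u) - 1)) x = 0 := by
          by_contra h0
          exact hx (hts (support_iteratedFDeriv_subset n
            (by simpa [Function.mem_support] using h0)))
        rw [h0]
        simp only [norm_zero, mul_zero]
        positivity
    have h1 : ∀ᶠ σ in nhds (0 : ℝ), C * |σ| < ε := by
      have ht : Tendsto (fun σ : ℝ => C * |σ|) (nhds 0) (nhds 0) := by
        have := ((continuous_const (y := C)).mul _root_.continuous_abs).tendsto (0 : ℝ)
        simpa [Pi.mul_def] using this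
      exact ht.eventually_lt_const hε
    have h2 : ∀ᶠ σ in nhds (0 : ℝ), |σ| ≤ δ := by
      filter_upwards [Metric.closedBall_mem_nhds (0 : ℝ) hδ0] with σ hσ
      simpa [Real.dist_eq] using hσ
    filter_upwards [h1, h2] with σ hσ1 hσ2
    simpa [schwartzSeminormFamily] using lt_of_le_of_lt (key σ hσ2) hσ1
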